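/- The subspace 𝔤₂ = {α ∈ 𝔰𝔬(7) : ∑_{b,c} (Φ₀)_{abc} α_{bc} = 0 for every index a} is closed under the matrix commutator: if α, β ∈ 𝔤₂ then αβ − βα ∈ 𝔤₂; hence 𝔤₂ is a Lie subalgebra of the 7×7 real matrices. -/
import Mathlib


noncomputable section

/-- `tri i j k` is the 3-form `dxᵢ ∧ dxⱼ ∧ dxₖ` on `ℝ⁷` (0-based indices). -/
def tri (i j k : Fin 7) (u v w : Fin 7 → ℝ) : ℝ :=
  u i * (v j * w k - v k * w j) - u j * (v i * w k - v k * w i)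
    + u k * (v i * w j - v j * w i)

/-- The standard `G₂` three-form
`Φ₀ = dx₁₂₃ + dx₁₄₅ + dx₁₆₇ + dx₂₄₆ − dx₂₅₇ − dx₃₄₇ − dx₃₅₆` (written here
with 0-based indices). -/
def phi0 (u v w : Fin 7 → ℝ) : ℝ :=
  tri 0 1 2 u v w + tri 0 3 4 u v w + tri 0 5 6 u v w + tri 1 3 5 u v w
    - tri 1 4 6 u v w - tri 2 3 6 u v w - tri 2 4 5 u v w

/-- The standard Euclidean inner product on `ℝ⁷`. -/
def ip (u v : Fin 7 → ℝ) : ℝ := ∑ i, u i * v i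

/-- Components `(Φ₀)_{abc} = Φ₀(e_a, e_b, e_c)` of the three-form `Φ₀`. -/
def phi0c (a b c : Fin 7) : ℝ :=
  phi0 (Pi.single a 1) (Pi.single b 1) (Pi.single c 1)

/-- The contraction map `f_{Φ₀} : v ↦ v ⌟ Φ₀`, `(f_{Φ₀}(v))_{ab} = Φ₀(v, e_a, e_b)`. -/
def fmat (v : Fin 7 → ℝ) : Matrix (Fin 7) (Fin 7) ℝ :=
  Matrix.of fun a b => phi0 v (Pi.single a 1) (Pi.single b 1)

/-- The cross product on `ℝ⁷` determined by `⟨u × v, w⟩ = Φ₀(u, v, w)`. -/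
def cross7 (u v : Fin 7 → ℝ) : Fin 7 → ℝ := fun a => phi0 u v (Pi.single a 1)

section
variable (M : Matrix (Fin 7) (Fin 7) ℝ)

lemma key0 : ∑ b, ∑ c, phi0c 0 b c * M b c = M 1 2 - M 2 1 + M 3 4 - M 4 3 + M 5 6 - M 6 5 := by
  simp only [Fin.sum_univ_seven]
  simp (config := { decide := true }) [phi0c, phi0, tri, Pi.single_apply]
  ring
lemma key1 : ∑ b, ∑ c, phi0c 1 b c * M b c = -M 0 2 + M 2 0 + M 3 5 - M 5 3 - M 4 6 + M 6 4 := by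
  simp only [Fin.sum_univ_seven]
  simp (config := { decide := true }) [phi0c, phi0, tri, Pi.single_apply]
  ring
lemma key2 : ∑ b, ∑ c, phi0c 2 b c * M b c = M 0 1 - M 1 0 - M 3 6 + M 6 3 - M 4 5 + M 5 4 := by
  simp only [Fin.sum_univ_seven]
  simp (config := { decide := true }) [phi0c, phi0, tri, Pi.single_apply]
  ring
lemma key3 : ∑ b, ∑ c, phi0c 3 b c * M b c = -M 0 4 + M 4 0 - M 1 5 + M 5 1 + M 2 6 - M 6 2 := by
  simp only [Fin.sum_univ_seven]
  simp (config := { decide := true }) [phi0c, phi0, tri, Pi.single_apply]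
  ring
lemma key4 : ∑ b, ∑ c, phi0c 4 b c * M b c = M 0 3 - M 3 0 + M 1 6 - M 6 1 + M 2 5 - M 5 2 := by
  simp only [Fin.sum_univ_seven]
  simp (config := { decide := true }) [phi0c, phi0, tri, Pi.single_apply]
  ring
lemma key5 : ∑ b, ∑ c, phi0c 5 b c * M b c = -M 0 6 + M 6 0 + M 1 3 - M 3 1 - M 2 4 + M 4 2 := by
  simp only [Fin.sum_univ_seven]
  simp (config := { decide := true }) [phi0c, phi0, tri, Pi.single_apply]
  ring
lemma key6 : ∑ b, ∑ c, phi0c 6 b c * M b c = M 0 5 - M 5 0 - M 1 4 + M 4 1 - M 2 3 + M 3 2 := by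
  simp only [Fin.sum_univ_seven]
  simp (config := { decide := true }) [phi0c, phi0, tri, Pi.single_apply]
  ring
end

set_option maxHeartbeats 4000000 in
/-- `𝔤₂` is closed under the matrix commutator, hence is a Lie
subalgebra of the 7×7 real matrices. -/
theorem stmt18 (α β : Matrix (Fin 7) (Fin 7) ℝ)
    (hα : α.transpose = -α ∧ ∀ a, ∑ b, ∑ c, phi0c a b c * α b c = 0)
    (hβ : β.transpose = -β ∧ ∀ a, ∑ b, ∑ c, phi0c a b c * β b c = 0) :
    (α * β - β * α).transpose = -(α * β - β * α) ∧
      ∀ a, ∑ b, ∑ c, phi0c a b c * (α * β - β * α) b c = 0 := by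
  constructor
  · rw [Matrix.transpose_sub, Matrix.transpose_mul, Matrix.transpose_mul, hα.1, hβ.1]
    simp [Matrix.neg_mul, Matrix.mul_neg]
  have sα : ∀ i j, α j i = -α i j := fun i j => by
    have := congrFun (congrFun hα.1 i) j
    simpa [Matrix.transpose_apply, Matrix.neg_apply] using this
  have dα0 : α 0 0 = 0 := by have := sα 0 0; linarith
  have dα1 : α 1 1 = 0 := by have := sα 1 1; linarith
  have dα2 : α 2 2 = 0 := by have := sα 2 2; linarith
  have dα3 : α 3 3 = 0 := by have := sα 3 3; linarith
  have dα4 : α 4 4 = 0 := by have := sα 4 4; linarith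
  have dα5 : α 5 5 = 0 := by have := sα 5 5; linarith
  have dα6 : α 6 6 = 0 := by have := sα 6 6; linarith
  have lα10 : α 1 0 = -α 0 1 := sα 0 1
  have lα20 : α 2 0 = -α 0 2 := sα 0 2
  have lα30 : α 3 0 = -α 0 3 := sα 0 3
  have lα40 : α 4 0 = -α 0 4 := sα 0 4
  have lα50 : α 5 0 = -α 0 5 := sα 0 5
  have lα60 : α 6 0 = -α 0 6 := sα 0 6
  have lα21 : α 2 1 = -α 1 2 := sα 1 2
  have lα31 : α 3 1 = -α 1 3 := sα 1 3
  have lα41 : α 4 1 = -α 1 4 := sα 1 4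
  have lα51 : α 5 1 = -α 1 5 := sα 1 5
  have lα61 : α 6 1 = -α 1 6 := sα 1 6
  have lα32 : α 3 2 = -α 2 3 := sα 2 3
  have lα42 : α 4 2 = -α 2 4 := sα 2 4
  have lα52 : α 5 2 = -α 2 5 := sα 2 5
  have lα62 : α 6 2 = -α 2 6 := sα 2 6
  have lα43 : α 4 3 = -α 3 4 := sα 3 4
  have lα53 : α 5 3 = -α 3 5 := sα 3 5
  have lα63 : α 6 3 = -α 3 6 := sα 3 6
  have lα54 : α 5 4 = -α 4 5 := sα 4 5
  have lα64 : α 6 4 = -α 4 6 := sα 4 6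
  have lα65 : α 6 5 = -α 5 6 := sα 5 6
  have cα0 := hα.2 0
  rw [key0] at cα0
  have cα1 := hα.2 1
  rw [key1] at cα1
  have cα2 := hα.2 2
  rw [key2] at cα2
  have cα3 := hα.2 3
  rw [key3] at cα3
  have cα4 := hα.2 4
  rw [key4] at cα4
  have cα5 := hα.2 5
  rw [key5] at cα5
  have cα6 := hα.2 6
  rw [key6] at cα6
  simp only [lα10, lα20, lα30, lα40, lα50, lα60, lα21, lα31, lα41, lα51, lα61, lα32, lα42, lα52, lα62, lα43, lα53, lα63, lα54, lα64, lα65] at cα0 cα1 cα2 cα3 cα4 cα5 cα6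
  have eα0 : α 5 6 = -α 1 2 - α 3 4 := by linarith [cα0]
  have eα1 : α 4 6 = α 3 5 - α 0 2 := by linarith [cα1]
  have eα2 : α 4 5 = α 0 1 - α 3 6 := by linarith [cα2]
  have eα3 : α 2 6 = α 0 4 + α 1 5 := by linarith [cα3]
  have eα4 : α 2 5 = -α 0 3 - α 1 6 := by linarith [cα4]
  have eα5 : α 2 4 = α 1 3 - α 0 6 := by linarith [cα5]
  have eα6 : α 2 3 = α 0 5 - α 1 4 := by linarith [cα6]
  have sβ : ∀ i j, β j i = -β i j := fun i j => by
    have := congrFun (congrFun hβ.1 i) j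
    simpa [Matrix.transpose_apply, Matrix.neg_apply] using this
  have dβ0 : β 0 0 = 0 := by have := sβ 0 0; linarith
  have dβ1 : β 1 1 = 0 := by have := sβ 1 1; linarith
  have dβ2 : β 2 2 = 0 := by have := sβ 2 2; linarith
  have dβ3 : β 3 3 = 0 := by have := sβ 3 3; linarith
  have dβ4 : β 4 4 = 0 := by have := sβ 4 4; linarith
  have dβ5 : β 5 5 = 0 := by have := sβ 5 5; linarith
  have dβ6 : β 6 6 = 0 := by have := sβ 6 6; linarith
  have lβ10 : β 1 0 = -β 0 1 := sβ 0 1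
  have lβ20 : β 2 0 = -β 0 2 := sβ 0 2
  have lβ30 : β 3 0 = -β 0 3 := sβ 0 3
  have lβ40 : β 4 0 = -β 0 4 := sβ 0 4
  have lβ50 : β 5 0 = -β 0 5 := sβ 0 5
  have lβ60 : β 6 0 = -β 0 6 := sβ 0 6
  have lβ21 : β 2 1 = -β 1 2 := sβ 1 2
  have lβ31 : β 3 1 = -β 1 3 := sβ 1 3
  have lβ41 : β 4 1 = -β 1 4 := sβ 1 4
  have lβ51 : β 5 1 = -β 1 5 := sβ 1 5
  have lβ61 : β 6 1 = -β 1 6 := sβ 1 6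
  have lβ32 : β 3 2 = -β 2 3 := sβ 2 3
  have lβ42 : β 4 2 = -β 2 4 := sβ 2 4
  have lβ52 : β 5 2 = -β 2 5 := sβ 2 5
  have lβ62 : β 6 2 = -β 2 6 := sβ 2 6
  have lβ43 : β 4 3 = -β 3 4 := sβ 3 4
  have lβ53 : β 5 3 = -β 3 5 := sβ 3 5
  have lβ63 : β 6 3 = -β 3 6 := sβ 3 6
  have lβ54 : β 5 4 = -β 4 5 := sβ 4 5
  have lβ64 : β 6 4 = -β 4 6 := sβ 4 6
  have lβ65 : β 6 5 = -β 5 6 := sβ 5 6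
  have cβ0 := hβ.2 0
  rw [key0] at cβ0
  have cβ1 := hβ.2 1
  rw [key1] at cβ1
  have cβ2 := hβ.2 2
  rw [key2] at cβ2
  have cβ3 := hβ.2 3
  rw [key3] at cβ3
  have cβ4 := hβ.2 4
  rw [key4] at cβ4
  have cβ5 := hβ.2 5
  rw [key5] at cβ5
  have cβ6 := hβ.2 6
  rw [key6] at cβ6
  simp only [lβ10, lβ20, lβ30, lβ40, lβ50, lβ60, lβ21, lβ31, lβ41, lβ51, lβ61, lβ32, lβ42, lβ52, lβ62, lβ43, lβ53, lβ63, lβ54, lβ64, lβ65] at cβ0 cβ1 cβ2 cβ3 cβ4 cβ5 cβ6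
  have eβ0 : β 5 6 = -β 1 2 - β 3 4 := by linarith [cβ0]
  have eβ1 : β 4 6 = β 3 5 - β 0 2 := by linarith [cβ1]
  have eβ2 : β 4 5 = β 0 1 - β 3 6 := by linarith [cβ2]
  have eβ3 : β 2 6 = β 0 4 + β 1 5 := by linarith [cβ3]
  have eβ4 : β 2 5 = -β 0 3 - β 1 6 := by linarith [cβ4]
  have eβ5 : β 2 4 = β 1 3 - β 0 6 := by linarith [cβ5]
  have eβ6 : β 2 3 = β 0 5 - β 1 4 := by linarith [cβ6]
  have g0 : ∑ b, ∑ c, phi0c 0 b c * (α * β - β * α) b c = 0 := by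
    rw [key0]
    simp only [Matrix.sub_apply, Matrix.mul_apply, Fin.sum_univ_seven]
    simp only [dα0, dα1, dα2, dα3, dα4, dα5, dα6, lα10, lα20, lα30, lα40, lα50, lα60, lα21, lα31, lα41, lα51, lα61, lα32, lα42, lα52, lα62, lα43, lα53, lα63, lα54, lα64, lα65, eα0, eα1, eα2, eα3, eα4, eα5, eα6, dβ0, dβ1, dβ2, dβ3, dβ4, dβ5, dβ6, lβ10, lβ20, lβ30, lβ40, lβ50, lβ60, lβ21, lβ31, lβ41, lβ51, lβ61, lβ32, lβ42, lβ52, lβ62, lβ43, lβ53, lβ63, lβ54, lβ64, lβ65, eβ0, eβ1, eβ2, eβ3, eβ4, eβ5, eβ6]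
    ring
  have g1 : ∑ b, ∑ c, phi0c 1 b c * (α * β - β * α) b c = 0 := by
    rw [key1]
    simp only [Matrix.sub_apply, Matrix.mul_apply, Fin.sum_univ_seven]
    simp only [dα0, dα1, dα2, dα3, dα4, dα5, dα6, lα10, lα20, lα30, lα40, lα50, lα60, lα21, lα31, lα41, lα51, lα61, lα32, lα42, lα52, lα62, lα43, lα53, lα63, lα54, lα64, lα65, eα0, eα1, eα2, eα3, eα4, eα5, eα6, dβ0, dβ1, dβ2, dβ3, dβ4, dβ5, dβ6, lβ10, lβ20, lβ30, lβ40, lβ50, lβ60, lβ21, lβ31, lβ41, lβ51, lβ61, lβ32, lβ42, lβ52, lβ62, lβ43, lβ53, lβ63, lβ54, lβ64, lβ65, eβ0, eβ1, eβ2, eβ3, eβ4, eβ5, eβ6]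
    ring
  have g2 : ∑ b, ∑ c, phi0c 2 b c * (α * β - β * α) b c = 0 := by
    rw [key2]
    simp only [Matrix.sub_apply, Matrix.mul_apply, Fin.sum_univ_seven]
    simp only [dα0, dα1, dα2, dα3, dα4, dα5, dα6, lα10, lα20, lα30, lα40, lα50, lα60, lα21, lα31, lα41, lα51, lα61, lα32, lα42, lα52, lα62, lα43, lα53, lα63, lα54, lα64, lα65, eα0, eα1, eα2, eα3, eα4, eα5, eα6, dβ0, dβ1, dβ2, dβ3, dβ4, dβ5, dβ6, lβ10, lβ20, lβ30, lβ40, lβ50, lβ60, lβ21, lβ31, lβ41, lβ51, lβ61, lβ32, lβ42, lβ52, lβ62, lβ43, lβ53, lβ63, lβ54, lβ64, lβ65, eβ0, eβ1, eβ2, eβ3, eβ4, eβ5, eβ6]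
    ring
  have g3 : ∑ b, ∑ c, phi0c 3 b c * (α * β - β * α) b c = 0 := by
    rw [key3]
    simp only [Matrix.sub_apply, Matrix.mul_apply, Fin.sum_univ_seven]
    simp only [dα0, dα1, dα2, dα3, dα4, dα5, dα6, lα10, lα20, lα30, lα40, lα50, lα60, lα21, lα31, lα41, lα51, lα61, lα32, lα42, lα52, lα62, lα43, lα53, lα63, lα54, lα64, lα65, eα0, eα1, eα2, eα3, eα4, eα5, eα6, dβ0, dβ1, dβ2, dβ3, dβ4, dβ5, dβ6, lβ10, lβ20, lβ30, lβ40, lβ50, lβ60, lβ21, lβ31, lβ41, lβ51, lβ61, lβ32, lβ42, lβ52, lβ62, lβ43, lβ53, lβ63, lβ54, lβ64, lβ65, eβ0, eβ1, eβ2, eβ3, eβ4, eβ5, eβ6]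
    ring
  have g4 : ∑ b, ∑ c, phi0c 4 b c * (α * β - β * α) b c = 0 := by
    rw [key4]
    simp only [Matrix.sub_apply, Matrix.mul_apply, Fin.sum_univ_seven]
    simp only [dα0, dα1, dα2, dα3, dα4, dα5, dα6, lα10, lα20, lα30, lα40, lα50, lα60, lα21, lα31, lα41, lα51, lα61, lα32, lα42, lα52, lα62, lα43, lα53, lα63, lα54, lα64, lα65, eα0, eα1, eα2, eα3, eα4, eα5, eα6, dβ0, dβ1, dβ2, dβ3, dβ4, dβ5, dβ6, lβ10, lβ20, lβ30, lβ40, lβ50, lβ60, lβ21, lβ31, lβ41, lβ51, lβ61, lβ32, lβ42, lβ52, lβ62, lβ43, lβ53, lβ63, lβ54, lβ64, lβ65, eβ0, eβ1, eβ2, eβ3, eβ4, eβ5, eβ6]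
    ring
  have g5 : ∑ b, ∑ c, phi0c 5 b c * (α * β - β * α) b c = 0 := by
    rw [key5]
    simp only [Matrix.sub_apply, Matrix.mul_apply, Fin.sum_univ_seven]
    simp only [dα0, dα1, dα2, dα3, dα4, dα5, dα6, lα10, lα20, lα30, lα40, lα50, lα60, lα21, lα31, lα41, lα51, lα61, lα32, lα42, lα52, lα62, lα43, lα53, lα63, lα54, lα64, lα65, eα0, eα1, eα2, eα3, eα4, eα5, eα6, dβ0, dβ1, dβ2, dβ3, dβ4, dβ5, dβ6, lβ10, lβ20, lβ30, lβ40, lβ50, lβ60, lβ21, lβ31, lβ41, lβ51, lβ61, lβ32, lβ42, lβ52, lβ62, lβ43, lβ53, lβ63, lβ54, lβ64, lβ65, eβ0, eβ1, eβ2, eβ3, eβ4, eβ5, eβ6]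
    ring
  have g6 : ∑ b, ∑ c, phi0c 6 b c * (α * β - β * α) b c = 0 := by
    rw [key6]
    simp only [Matrix.sub_apply, Matrix.mul_apply, Fin.sum_univ_seven]
    simp only [dα0, dα1, dα2, dα3, dα4, dα5, dα6, lα10, lα20, lα30, lα40, lα50, lα60, lα21, lα31, lα41, lα51, lα61, lα32, lα42, lα52, lα62, lα43, lα53, lα63, lα54, lα64, lα65, eα0, eα1, eα2, eα3, eα4, eα5, eα6, dβ0, dβ1, dβ2, dβ3, dβ4, dβ5, dβ6, lβ10, lβ20, lβ30, lβ40, lβ50, lβ60, lβ21, lβ31, lβ41, lβ51, lβ61, lβ32, lβ42, lβ52, lβ62, lβ43, lβ53, lβ63, lβ54, lβ64, lβ65, eβ0, eβ1, eβ2, eβ3, eβ4, eβ5, eβ6]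
    ring
  intro a
  fin_cases a
  · exact g0
  · exact g1
  · exact g2
  · exact g3
  · exact g4
  · exact g5
  · exact g6
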